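/- Let B be a fuzzy ideal of a fuzzy Riesz space X. Then the following are equivalent: (i) B is a fuzzy projection band (X = B ⊕ B^d); (ii) for each x ∈ X⁺ the supremum of the set B⁺ ∩ [0,x] = {y ∈ B : μ(0,y)>1/2 and μ(y,x)>1/2} exists in X and belongs to B; (iii) there exists a fuzzy ideal I of X with I ∩ B = {0} and X = I + B. -/
import Mathlib


/-- A fuzzy Riesz space structure on a real vector space `X`:
a fuzzy order `μ : X × X → [0,1]` compatible with the vector structure,
together with binary suprema and infima with respect to the fuzzy order. -/
structure FuzzyRiesz (X : Type*) [AddCommGroup X] [Module ℝ X] where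
  μ : X → X → ℝ
  nonneg : ∀ x y : X, 0 ≤ μ x y
  le_one : ∀ x y : X, μ x y ≤ 1
  refl : ∀ x : X, μ x x = 1
  antisymm : ∀ x y : X, 1 < μ x y + μ y x → x = y
  trans : ∀ x y z : X, min (μ x y) (μ y z) ≤ μ x z
  add_compat : ∀ x y z : X, 1/2 < μ x y → μ x y ≤ μ (x + z) (y + z)
  smul_compat : ∀ (x y : X) (c : ℝ), 0 ≤ c → 1/2 < μ x y → μ x y ≤ μ (c • x) (c • y)
  sup : X → X → X
  inf : X → X → X
  le_sup_left : ∀ x y : X, 1/2 < μ x (sup x y)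
  le_sup_right : ∀ x y : X, 1/2 < μ y (sup x y)
  sup_le : ∀ x y z : X, 1/2 < μ x z → 1/2 < μ y z → 1/2 < μ (sup x y) z
  inf_le_left : ∀ x y : X, 1/2 < μ (inf x y) x
  inf_le_right : ∀ x y : X, 1/2 < μ (inf x y) y
  le_inf : ∀ x y z : X, 1/2 < μ z x → 1/2 < μ z y → 1/2 < μ z (inf x y)

namespace FuzzyRiesz

universe v

variable {X : Type*} [AddCommGroup X] [Module ℝ X]

/-- The absolute value `|x| = x ∨ (−x)`. -/
def fabs (F : FuzzyRiesz X) (x : X) : X := F.sup x (-x)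

/-- `x` is positive: `μ(0,x) > 1/2`. -/
def Pos (F : FuzzyRiesz X) (x : X) : Prop := 1/2 < F.μ 0 x

/-- `S⁺`, the set of positive elements of `S`. -/
def posPart (F : FuzzyRiesz X) (S : Set X) : Set X := {x ∈ S | F.Pos x}

/-- `y` is an upper bound of `A`. -/
def UpperBound (F : FuzzyRiesz X) (A : Set X) (y : X) : Prop := ∀ x ∈ A, 1/2 < F.μ x y

/-- `y` is a lower bound of `A`. -/
def LowerBound (F : FuzzyRiesz X) (A : Set X) (y : X) : Prop := ∀ x ∈ A, 1/2 < F.μ y x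

/-- `z = sup A` in the fuzzy order. -/
def IsSup (F : FuzzyRiesz X) (A : Set X) (z : X) : Prop :=
  F.UpperBound A z ∧ ∀ y : X, F.UpperBound A y → 1/2 < F.μ z y

/-- `z = inf A` in the fuzzy order. -/
def IsInf (F : FuzzyRiesz X) (A : Set X) (z : X) : Prop :=
  F.LowerBound A z ∧ ∀ y : X, F.LowerBound A y → 1/2 < F.μ y z

/-- `z = inf A`, computed relative to the subset `Y` (lower bounds taken in `Y`). -/
def IsInfIn (F : FuzzyRiesz X) (Y A : Set X) (z : X) : Prop :=
  F.LowerBound A z ∧ ∀ y ∈ Y, F.LowerBound A y → 1/2 < F.μ y z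

/-- A set is fuzzy solid if `μ(|x|,|y|) > 1/2` and `y ∈ A` imply `x ∈ A`. -/
def Solid (F : FuzzyRiesz X) (A : Set X) : Prop :=
  ∀ x y : X, 1/2 < F.μ (F.fabs x) (F.fabs y) → y ∈ A → x ∈ A

/-- A fuzzy ideal: a fuzzy solid vector subspace. -/
structure IsIdeal (F : FuzzyRiesz X) (I : Set X) : Prop where
  zero_mem : (0 : X) ∈ I
  add_mem : ∀ {x y : X}, x ∈ I → y ∈ I → x + y ∈ I
  smul_mem : ∀ (c : ℝ) {x : X}, x ∈ I → c • x ∈ I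
  solid : ∀ x y : X, 1/2 < F.μ (F.fabs x) (F.fabs y) → y ∈ I → x ∈ I

/-- A fuzzy ideal of the subspace `Y` (with the restricted fuzzy order and
vector structure): a vector subspace of `Y` that is solid relative to `Y`. -/
structure IsIdealIn (F : FuzzyRiesz X) (Y I : Set X) : Prop where
  subset : I ⊆ Y
  zero_mem : (0 : X) ∈ I
  add_mem : ∀ {x y : X}, x ∈ I → y ∈ I → x + y ∈ I
  smul_mem : ∀ (c : ℝ) {x : X}, x ∈ I → c • x ∈ I
  solid : ∀ x ∈ Y, ∀ y ∈ I, 1/2 < F.μ (F.fabs x) (F.fabs y) → x ∈ I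

/-- A decreasing net. -/
def Decreasing (F : FuzzyRiesz X) {ι : Type v} [Preorder ι] (y : ι → X) : Prop :=
  ∀ a b : ι, a ≤ b → 1/2 < F.μ (y b) (y a)

/-- An increasing net. -/
def Increasing (F : FuzzyRiesz X) {ι : Type v} [Preorder ι] (x : ι → X) : Prop :=
  ∀ a b : ι, a ≤ b → 1/2 < F.μ (x a) (x b)

/-- The net `x` converges in fuzzy order to `l`: there is a net `y` over the same
index set with `μ(|x_α − l|, y_α) > 1/2` for all `α` and `y_α ↓ 0`. -/
def FuzzyOrderConv (F : FuzzyRiesz X) {ι : Type v} [Preorder ι] (x : ι → X) (l : X) : Prop :=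
  ∃ y : ι → X, (∀ a, 1/2 < F.μ (F.fabs (x a - l)) (y a)) ∧ F.Decreasing y ∧
    F.IsInf (Set.range y) 0

/-- Fuzzy order convergence relative to the subset `Y` (the dominating net lies in `Y`
and its infimum is computed in `Y`). -/
def FuzzyOrderConvIn (F : FuzzyRiesz X) (Y : Set X) {ι : Type v} [Preorder ι]
    (x : ι → X) (l : X) : Prop :=
  ∃ y : ι → X, (∀ a, y a ∈ Y) ∧ (∀ a, 1/2 < F.μ (F.fabs (x a - l)) (y a)) ∧ F.Decreasing y ∧
    F.IsInfIn Y (Set.range y) 0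

/-- `S` is fuzzy σ-order closed: closed under fuzzy order limits of sequences in `S`. -/
def SigmaOrderClosed (F : FuzzyRiesz X) (S : Set X) : Prop :=
  ∀ (x : ℕ → X) (l : X), (∀ n, x n ∈ S) → F.FuzzyOrderConv x l → l ∈ S

/-- `S` is fuzzy order closed: closed under fuzzy order limits of nets in `S`. -/
def OrderClosed (F : FuzzyRiesz X) (S : Set X) : Prop :=
  ∀ (ι : Type v) [Preorder ι] [Nonempty ι] [IsDirected ι (· ≤ ·)],
    ∀ (x : ι → X) (l : X), (∀ a, x a ∈ S) → F.FuzzyOrderConv x l → l ∈ S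

/-- `S` is fuzzy order closed in the subspace `Y`. -/
def OrderClosedIn (F : FuzzyRiesz X) (Y S : Set X) : Prop :=
  ∀ (ι : Type v) [Preorder ι] [Nonempty ι] [IsDirected ι (· ≤ ·)],
    ∀ (x : ι → X) (l : X), (∀ a, x a ∈ S) → l ∈ Y → F.FuzzyOrderConvIn Y x l → l ∈ S

/-- A fuzzy band: a fuzzy order closed fuzzy ideal. -/
def IsBand (F : FuzzyRiesz X) (B : Set X) : Prop := F.IsIdeal B ∧ OrderClosed.{v} F B

/-- A fuzzy band of the subspace `Y`. -/
def IsBandIn (F : FuzzyRiesz X) (Y B : Set X) : Prop := F.IsIdealIn Y B ∧ OrderClosedIn.{v} F Y B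

/-- The disjoint complement `A^d = {x : |x| ∧ |y| = 0 for all y ∈ A}`. -/
def dcomp (F : FuzzyRiesz X) (A : Set X) : Set X :=
  {x : X | ∀ y ∈ A, F.inf (F.fabs x) (F.fabs y) = 0}

/-- The algebraic sum of two subsets. -/
def sumSet (A B : Set X) : Set X := {z : X | ∃ a ∈ A, ∃ b ∈ B, z = a + b}

/-- `S` is fuzzy order dense in `X`. -/
def OrderDense (F : FuzzyRiesz X) (S : Set X) : Prop :=
  ∀ x : X, x ≠ 0 → F.Pos x → ∃ y ∈ S, y ≠ 0 ∧ 1/2 < F.μ y x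

/-- `S` is fuzzy order dense in the subspace `Y`. -/
def OrderDenseIn (F : FuzzyRiesz X) (Y S : Set X) : Prop :=
  ∀ x ∈ Y, x ≠ 0 → F.Pos x → ∃ y ∈ S, y ≠ 0 ∧ 1/2 < F.μ y x

/-- `x` is nonnegative: it is not the case that `μ(x,0) > 1/2`. -/
def Nonneg (F : FuzzyRiesz X) (x : X) : Prop := ¬ (1/2 < F.μ x 0)

/-- `X` is fuzzy Archimedean: for every nonzero nonnegative `x`, the set
`{λ • x : λ > 0}` has no upper bound. -/
def FuzzyArchimedean (F : FuzzyRiesz X) : Prop :=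
  ∀ x : X, x ≠ 0 → F.Nonneg x →
    ¬ ∃ y : X, F.UpperBound {z : X | ∃ c : ℝ, 0 < c ∧ z = c • x} y

/-- `X` is fuzzy Dedekind complete. -/
def DedekindComplete (F : FuzzyRiesz X) : Prop :=
  ∀ A : Set X, A.Nonempty → (∃ y, F.UpperBound A y) → ∃ z, F.IsSup A z

/-- `X` is fuzzy Dedekind σ-complete. -/
def DedekindSigmaComplete (F : FuzzyRiesz X) : Prop :=
  ∀ A : Set X, A.Nonempty → A.Countable →
    ((∃ y, F.UpperBound A y) → ∃ z, F.IsSup A z) ∧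
    ((∃ y, F.LowerBound A y) → ∃ z, F.IsInf A z)

/-- `D` is directed to the right. -/
def DirectedRight (F : FuzzyRiesz X) (D : Set X) : Prop :=
  ∀ E : Set X, E ⊆ D → E.Finite → ∃ d ∈ D, ∀ e ∈ E, 1/2 < F.μ e d

/-- `B` is a fuzzy projection band: a fuzzy band such that every `x ∈ X` decomposes
uniquely as `x = x₁ + x₂` with `x₁ ∈ B`, `x₂ ∈ B^d`. -/
def IsProjBand (F : FuzzyRiesz X) (B : Set X) : Prop :=
  IsBand.{v} F B ∧ ∀ x : X, ∃! p : X × X, p.1 ∈ B ∧ p.2 ∈ F.dcomp B ∧ x = p.1 + p.2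

/-- There is an increasing net of elements of `S`, over some nonempty directed
preordered index set, whose supremum is `l`. -/
def IncNetSup (F : FuzzyRiesz X) (S : Set X) (l : X) : Prop :=
  ∃ (ι : Type v) (r : ι → ι → Prop), Nonempty ι ∧ (∀ a, r a a) ∧
    (∀ a b c, r a b → r b c → r a c) ∧ (∀ a b, ∃ c, r a c ∧ r b c) ∧
    ∃ net : ι → X, (∀ a, net a ∈ S) ∧ (∀ a b, r a b → 1/2 < F.μ (net a) (net b)) ∧
      F.IsSup (Set.range net) l

end FuzzyRiesz

/-! ### Auxiliary order-theoretic infrastructure -/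

namespace FuzzyRiesz

variable {X : Type*} [AddCommGroup X] [Module ℝ X] {F : FuzzyRiesz X}

/-- The crisp order induced by the fuzzy order. -/
def fle (F : FuzzyRiesz X) (x y : X) : Prop := 1/2 < F.μ x y

lemma fle_refl (F : FuzzyRiesz X) (x : X) : F.fle x x := by
  unfold fle; rw [F.refl]; norm_num

lemma fle_trans {x y z : X} (h1 : F.fle x y) (h2 : F.fle y z) : F.fle x z :=
  lt_of_lt_of_le (lt_min h1 h2) (F.trans x y z)

lemma fle_antisymm {x y : X} (h1 : F.fle x y) (h2 : F.fle y x) : x = y :=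
  F.antisymm x y (by unfold fle at h1 h2; linarith)

lemma fle_add_right {x y : X} (h : F.fle x y) (z : X) : F.fle (x + z) (y + z) :=
  lt_of_lt_of_le h (F.add_compat x y z h)

lemma fle_of_add_right {x y z : X} (h : F.fle (x + z) (y + z)) : F.fle x y := by
  have h2 := fle_add_right h (-z)
  have e1 : x + z + -z = x := by abel
  have e2 : y + z + -z = y := by abel
  rwa [e1, e2] at h2

lemma fle_add_left {x y : X} (h : F.fle x y) (z : X) : F.fle (z + x) (z + y) := by
  rw [add_comm z x, add_comm z y]; exact fle_add_right h z

lemma fle_add {a b c d : X} (h1 : F.fle a b) (h2 : F.fle c d) : F.fle (a + c) (b + d) :=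
  fle_trans (fle_add_right h1 c) (fle_add_left h2 b)

lemma fle_neg {x y : X} (h : F.fle x y) : F.fle (-y) (-x) := by
  have h2 := fle_add_right h (-(x + y))
  have e1 : x + -(x + y) = -y := by abel
  have e2 : y + -(x + y) = -x := by abel
  rwa [e1, e2] at h2

lemma fle_smul {x y : X} {c : ℝ} (hc : 0 ≤ c) (h : F.fle x y) : F.fle (c • x) (c • y) :=
  lt_of_lt_of_le h (F.smul_compat x y c hc h)

lemma fle_sub {x y : X} (h : F.fle x y) : F.fle 0 (y - x) := by
  have h2 := fle_add_right h (-x)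
  have e1 : x + -x = (0 : X) := by abel
  have e2 : y + -x = y - x := by abel
  rwa [e1, e2] at h2

lemma fle_smul_zero {c : ℝ} {x : X} (hc : 0 ≤ c) (h : F.fle 0 x) : F.fle 0 (c • x) := by
  have h2 := fle_smul hc h; rwa [smul_zero] at h2

lemma fle_add_of_nonneg {a c : X} (hc : F.fle 0 c) : F.fle a (a + c) := by
  have h2 := fle_add_left hc a; rwa [add_zero] at h2

lemma fsup_le {x y z : X} (h1 : F.fle x z) (h2 : F.fle y z) : F.fle (F.sup x y) z :=
  F.sup_le x y z h1 h2

lemma fle_finf {x y z : X} (h1 : F.fle z x) (h2 : F.fle z y) : F.fle z (F.inf x y) :=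
  F.le_inf x y z h1 h2

lemma fsup_mono {a b c d : X} (h1 : F.fle a c) (h2 : F.fle b d) :
    F.fle (F.sup a b) (F.sup c d) :=
  fsup_le (fle_trans h1 (F.le_sup_left c d)) (fle_trans h2 (F.le_sup_right c d))

lemma finf_mono {a b c d : X} (h1 : F.fle a c) (h2 : F.fle b d) :
    F.fle (F.inf a b) (F.inf c d) :=
  fle_finf (fle_trans (F.inf_le_left a b) h1) (fle_trans (F.inf_le_right a b) h2)

lemma fsup_comm (F : FuzzyRiesz X) (a b : X) : F.sup a b = F.sup b a :=
  fle_antisymm (fsup_le (F.le_sup_right b a) (F.le_sup_left b a))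
    (fsup_le (F.le_sup_right a b) (F.le_sup_left a b))

lemma finf_comm (F : FuzzyRiesz X) (a b : X) : F.inf a b = F.inf b a :=
  fle_antisymm (fle_finf (F.inf_le_right a b) (F.inf_le_left a b))
    (fle_finf (F.inf_le_right b a) (F.inf_le_left b a))

lemma finf_idem (F : FuzzyRiesz X) (a : X) : F.inf a a = a :=
  fle_antisymm (F.inf_le_left a a) (fle_finf (fle_refl F a) (fle_refl F a))

lemma fsup_add (F : FuzzyRiesz X) (a b c : X) : F.sup a b + c = F.sup (a + c) (b + c) := by
  apply fle_antisymm
  · have h1 : F.fle a (F.sup (a + c) (b + c) + -c) := by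
      have := fle_add_right (F.le_sup_left (a + c) (b + c)) (-c)
      have e : a + c + -c = a := by abel
      rwa [e] at this
    have h2 : F.fle b (F.sup (a + c) (b + c) + -c) := by
      have := fle_add_right (F.le_sup_right (a + c) (b + c)) (-c)
      have e : b + c + -c = b := by abel
      rwa [e] at this
    have h3 := fle_add_right (fsup_le h1 h2) c
    have e : F.sup (a + c) (b + c) + -c + c = F.sup (a + c) (b + c) := by abel
    rwa [e] at h3
  · exact fsup_le (fle_add_right (F.le_sup_left a b) c) (fle_add_right (F.le_sup_right a b) c)

lemma finf_add (F : FuzzyRiesz X) (a b c : X) : F.inf a b + c = F.inf (a + c) (b + c) := by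
  apply fle_antisymm
  · exact fle_finf (fle_add_right (F.inf_le_left a b) c) (fle_add_right (F.inf_le_right a b) c)
  · have h1 : F.fle (F.inf (a + c) (b + c) + -c) a := by
      have := fle_add_right (F.inf_le_left (a + c) (b + c)) (-c)
      have e : a + c + -c = a := by abel
      rwa [e] at this
    have h2 : F.fle (F.inf (a + c) (b + c) + -c) b := by
      have := fle_add_right (F.inf_le_right (a + c) (b + c)) (-c)
      have e : b + c + -c = b := by abel
      rwa [e] at this
    have h3 := fle_add_right (fle_finf h1 h2) c
    have e : F.inf (a + c) (b + c) + -c + c = F.inf (a + c) (b + c) := by abel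
    rwa [e] at h3

lemma fle_fabs (F : FuzzyRiesz X) (x : X) : F.fle x (F.fabs x) := F.le_sup_left x (-x)

lemma neg_fle_fabs (F : FuzzyRiesz X) (x : X) : F.fle (-x) (F.fabs x) := F.le_sup_right x (-x)

lemma fabs_nonneg (F : FuzzyRiesz X) (x : X) : F.fle 0 (F.fabs x) := by
  have h : F.fle (x + -x) (F.fabs x + F.fabs x) := fle_add (fle_fabs F x) (neg_fle_fabs F x)
  have e1 : x + -x = (0 : X) := by abel
  rw [e1, ← two_smul ℝ] at h
  have h2 := fle_smul (by norm_num : (0:ℝ) ≤ 1/2) h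
  have e : (1/2 * 2 : ℝ) = 1 := by norm_num
  rwa [smul_zero, smul_smul, e, one_smul] at h2

lemma fabs_neg (F : FuzzyRiesz X) (x : X) : F.fabs (-x) = F.fabs x := by
  unfold fabs; rw [neg_neg, fsup_comm]

lemma fabs_of_nonneg {x : X} (h : F.fle 0 x) : F.fabs x = x := by
  apply fle_antisymm
  · apply fsup_le (fle_refl F x)
    have h2 := fle_neg h
    rw [neg_zero] at h2
    exact fle_trans h2 h
  · exact fle_fabs F x

lemma fabs_zero (F : FuzzyRiesz X) : F.fabs (0 : X) = 0 := fabs_of_nonneg (fle_refl F 0)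

lemma eq_zero_of_fabs_eq_zero {x : X} (h : F.fabs x = 0) : x = 0 := by
  have h1 : F.fle x 0 := h ▸ fle_fabs F x
  have h2 : F.fle (-x) 0 := h ▸ neg_fle_fabs F x
  have h3 := fle_neg h2
  rw [neg_neg, neg_zero] at h3
  exact fle_antisymm h1 h3

lemma fabs_add (F : FuzzyRiesz X) (x y : X) :
    F.fle (F.fabs (x + y)) (F.fabs x + F.fabs y) := by
  apply fsup_le
  · exact fle_add (fle_fabs F x) (fle_fabs F y)
  · have h := fle_add (neg_fle_fabs F x) (neg_fle_fabs F y)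
    rwa [← neg_add] at h

/-- Positive part. -/
def fpos (F : FuzzyRiesz X) (x : X) : X := F.sup x 0

/-- Negative part. -/
def fneg (F : FuzzyRiesz X) (x : X) : X := F.sup (-x) 0

lemma fpos_nonneg (F : FuzzyRiesz X) (x : X) : F.fle 0 (F.fpos x) := F.le_sup_right x 0

lemma fneg_nonneg (F : FuzzyRiesz X) (x : X) : F.fle 0 (F.fneg x) := F.le_sup_right (-x) 0

lemma fle_fpos (F : FuzzyRiesz X) (x : X) : F.fle x (F.fpos x) := F.le_sup_left x 0

lemma fpos_eq (F : FuzzyRiesz X) (x : X) : F.fpos x = x + F.fneg x := by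
  unfold fpos fneg
  have h : F.sup (-x) 0 + x = F.sup (-x + x) (0 + x) := fsup_add F (-x) 0 x
  rw [neg_add_cancel, zero_add] at h
  rw [add_comm x, h, fsup_comm]

lemma fpos_le_fabs (F : FuzzyRiesz X) (x : X) : F.fle (F.fpos x) (F.fabs x) :=
  fsup_le (fle_fabs F x) (fabs_nonneg F x)

lemma fneg_le_fabs (F : FuzzyRiesz X) (x : X) : F.fle (F.fneg x) (F.fabs x) :=
  fsup_le (neg_fle_fabs F x) (fabs_nonneg F x)

lemma fpos_mono {x y : X} (h : F.fle x y) : F.fle (F.fpos x) (F.fpos y) :=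
  fsup_mono h (fle_refl F 0)

lemma nonneg_of_fneg_eq_zero {x : X} (h : F.fneg x = 0) : F.fle 0 x := by
  have h2 := fpos_eq F x
  rw [h, add_zero] at h2
  have h3 := fpos_nonneg F x
  rwa [h2] at h3

lemma finf_subadd {a b c : X} (ha : F.fle 0 a) (hb : F.fle 0 b) (hc : F.fle 0 c) :
    F.fle (F.inf a (b + c)) (F.inf a b + F.inf a c) := by
  have hab : F.fle 0 (F.inf a b) := fle_finf ha hb
  have s1 : F.fle (F.inf a (b + c)) (F.inf a b + c) := by
    have h : F.fle (F.inf a (b + c)) (F.inf (a + c) (b + c)) :=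
      fle_finf (fle_trans (F.inf_le_left _ _) (fle_add_of_nonneg hc)) (F.inf_le_right _ _)
    rwa [← finf_add] at h
  have s2 : F.fle (F.inf a (b + c)) (F.inf a (F.inf a b + c)) :=
    fle_finf (F.inf_le_left _ _) s1
  have s3 : F.fle (F.inf a (F.inf a b + c)) (F.inf a b + F.inf a c) := by
    have h1 : F.fle a (a + F.inf a b) := fle_add_of_nonneg hab
    have h : F.fle (F.inf a (F.inf a b + c)) (F.inf (a + F.inf a b) (F.inf a b + c)) :=
      finf_mono h1 (fle_refl F _)
    have e : F.inf (a + F.inf a b) (F.inf a b + c) = F.inf a b + F.inf a c := by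
      rw [add_comm (F.inf a b) (F.inf a c), finf_add F a c (F.inf a b), add_comm c (F.inf a b)]
    rw [e] at h
    exact h
  exact fle_trans s2 s3

lemma finf_zero_add {a b c : X} (ha : F.fle 0 a) (hb : F.fle 0 b) (hc : F.fle 0 c)
    (h1 : F.inf a b = 0) (h2 : F.inf a c = 0) : F.inf a (b + c) = 0 := by
  apply fle_antisymm
  · have h := finf_subadd ha hb hc
    rwa [h1, h2, add_zero] at h
  · refine fle_finf ha ?_
    have h := fle_add hb hc
    rwa [add_zero] at h

lemma finf_zero_nsmul {a b : X} (ha : F.fle 0 a) (hb : F.fle 0 b) (h : F.inf a b = 0) :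
    ∀ n : ℕ, F.inf a ((n : ℝ) • b) = 0 := by
  intro n
  induction n with
  | zero =>
      rw [Nat.cast_zero, zero_smul]
      exact fle_antisymm (F.inf_le_right a 0) (fle_finf ha (fle_refl F 0))
  | succ k ih =>
      have e : ((k + 1 : ℕ) : ℝ) • b = (k : ℝ) • b + b := by
        push_cast
        rw [add_smul, one_smul]
      rw [e]
      exact finf_zero_add ha (fle_smul_zero (by positivity) hb) hb ih h

lemma finf_zero_mono {a a' b : X} (h0 : F.fle 0 a') (h : F.fle a' a) (hb : F.fle 0 b)
    (hd : F.inf a b = 0) : F.inf a' b = 0 := by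
  apply fle_antisymm
  · have h2 := finf_mono h (fle_refl F b)
    rwa [hd] at h2
  · exact fle_finf h0 hb

lemma fabs_smul_bound (c : ℝ) (x : X) :
    ∃ n : ℕ, F.fle (F.fabs (c • x)) ((n : ℝ) • F.fabs x) := by
  have key : ∀ d : ℝ, 0 ≤ d → ∀ z : X, F.fle (F.fabs (d • z)) ((⌈d⌉₊ : ℝ) • F.fabs z) := by
    intro d hd z
    have hdn : d ≤ (⌈d⌉₊ : ℝ) := Nat.le_ceil d
    have hstep : F.fle (d • F.fabs z) ((⌈d⌉₊ : ℝ) • F.fabs z) := by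
      have h0 : F.fle 0 (((⌈d⌉₊ : ℝ) - d) • F.fabs z) :=
        fle_smul_zero (by linarith) (fabs_nonneg F z)
      have h1 := fle_add_left h0 (d • F.fabs z)
      rw [add_zero, ← add_smul] at h1
      have e : d + ((⌈d⌉₊ : ℝ) - d) = (⌈d⌉₊ : ℝ) := by ring
      rwa [e] at h1
    apply fsup_le
    · exact fle_trans (fle_smul hd (fle_fabs F z)) hstep
    · have h3 : F.fle (d • (-z)) (d • F.fabs z) := fle_smul hd (neg_fle_fabs F z)
      rw [smul_neg] at h3
      exact fle_trans h3 hstep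
  rcases le_or_gt 0 c with hc | hc
  · exact ⟨⌈c⌉₊, key c hc x⟩
  · refine ⟨⌈-c⌉₊, ?_⟩
    have e : c • x = (-c) • (-x) := by rw [neg_smul, smul_neg, neg_neg]
    rw [e]
    have h := key (-c) (by linarith) (-x)
    rwa [fabs_neg] at h

lemma IsIdeal.neg_mem {I : Set X} (hI : F.IsIdeal I) {x : X} (h : x ∈ I) : -x ∈ I := by
  have h2 := hI.smul_mem (-1) h
  rwa [neg_one_smul] at h2

lemma IsIdeal.sub_mem {I : Set X} (hI : F.IsIdeal I) {x y : X} (hx : x ∈ I) (hy : y ∈ I) :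
    x - y ∈ I := by
  rw [sub_eq_add_neg]
  exact hI.add_mem hx (hI.neg_mem hy)

lemma IsIdeal.fabs_mem {I : Set X} (hI : F.IsIdeal I) {x : X} (h : x ∈ I) : F.fabs x ∈ I :=
  hI.solid (F.fabs x) x
    (by rw [fabs_of_nonneg (fabs_nonneg F x)]; exact fle_refl F _) h

lemma zero_mem_dcomp (F : FuzzyRiesz X) (A : Set X) : (0 : X) ∈ F.dcomp A := by
  intro y _
  rw [fabs_zero]
  exact fle_antisymm (F.inf_le_left 0 (F.fabs y)) (fle_finf (fle_refl F 0) (fabs_nonneg F y))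

lemma dcomp_isIdeal (F : FuzzyRiesz X) (A : Set X) : F.IsIdeal (F.dcomp A) where
  zero_mem := zero_mem_dcomp F A
  add_mem := by
    intro x y hx hy b hb
    have h1 := hx b hb
    have h2 := hy b hb
    have h3 : F.inf (F.fabs x + F.fabs y) (F.fabs b) = 0 := by
      rw [finf_comm]
      exact finf_zero_add (fabs_nonneg F b) (fabs_nonneg F x) (fabs_nonneg F y)
        (by rw [finf_comm]; exact h1) (by rw [finf_comm]; exact h2)
    exact finf_zero_mono (fabs_nonneg F _) (fabs_add F x y) (fabs_nonneg F b) h3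
  smul_mem := by
    intro c x hx b hb
    obtain ⟨n, hn⟩ := fabs_smul_bound c x
    have h1 : F.inf ((n : ℝ) • F.fabs x) (F.fabs b) = 0 := by
      rw [finf_comm]
      exact finf_zero_nsmul (fabs_nonneg F b) (fabs_nonneg F x)
        (by rw [finf_comm]; exact hx b hb) n
    exact finf_zero_mono (fabs_nonneg F _) hn (fabs_nonneg F b) h1
  solid := by
    intro x y h hy b hb
    exact finf_zero_mono (fabs_nonneg F x) h (fabs_nonneg F b) (hy b hb)

lemma ortho_of_inter {I B : Set X} (hI : F.IsIdeal I) (hB : F.IsIdeal B)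
    (hIB : I ∩ B = {0}) : ∀ a ∈ I, ∀ b ∈ B, F.inf (F.fabs a) (F.fabs b) = 0 := by
  intro a ha b hb
  have hw0 : F.fle 0 (F.inf (F.fabs a) (F.fabs b)) :=
    fle_finf (fabs_nonneg F a) (fabs_nonneg F b)
  have hwI : F.inf (F.fabs a) (F.fabs b) ∈ I := hI.solid _ a
    (by rw [fabs_of_nonneg hw0]; exact F.inf_le_left _ _) ha
  have hwB : F.inf (F.fabs a) (F.fabs b) ∈ B := hB.solid _ b
    (by rw [fabs_of_nonneg hw0]; exact F.inf_le_right _ _) hb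
  have hmem : F.inf (F.fabs a) (F.fabs b) ∈ I ∩ B := ⟨hwI, hwB⟩
  rw [hIB] at hmem
  exact hmem

lemma pos_split {a b : X} (hd : F.inf (F.fabs a) (F.fabs b) = 0) (hx : F.fle 0 (a + b)) :
    F.fle 0 a ∧ F.fle 0 b := by
  have key : ∀ u v : X, F.inf (F.fabs u) (F.fabs v) = 0 → F.fle 0 (u + v) → F.fle 0 u := by
    intro u v h0 hs
    have h1 : F.fle (-u) v := by
      have h := fle_add_right hs (-u)
      have e1 : (0 : X) + -u = -u := by abel
      have e2 : u + v + -u = v := by abel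
      rwa [e1, e2] at h
    have h2 : F.fle (F.fneg u) (F.fabs v) :=
      fsup_le (fle_trans h1 (fle_fabs F v)) (fabs_nonneg F v)
    have h3 : F.fle (F.fneg u) 0 := by
      have h := fle_finf (fneg_le_fabs F u) h2
      rwa [h0] at h
    exact nonneg_of_fneg_eq_zero (fle_antisymm h3 (fneg_nonneg F u))
  refine ⟨key a b hd hx, key b a ?_ ?_⟩
  · rw [finf_comm]; exact hd
  · rwa [add_comm]

end FuzzyRiesz

open FuzzyRiesz

universe u

/-- for a fuzzy ideal `B`, the following are equivalent:
(i) `B` is a fuzzy projection band; (ii) for each `x ∈ X⁺`, `sup (B⁺ ∩ [0,x])`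
exists and belongs to `B`; (iii) there is a fuzzy ideal `I` with `X = I ⊕ B`. -/
theorem projBand_tfae {X : Type*} [AddCommGroup X] [Module ℝ X]
    (F : FuzzyRiesz X) (B : Set X) (hB : F.IsIdeal B) :
    (FuzzyRiesz.IsProjBand.{u} F B ↔
      ∀ x : X, F.Pos x →
        ∃ z ∈ B, F.IsSup {y : X | y ∈ B ∧ F.Pos y ∧ 1/2 < F.μ y x} z) ∧
    ((∀ x : X, F.Pos x →
        ∃ z ∈ B, F.IsSup {y : X | y ∈ B ∧ F.Pos y ∧ 1/2 < F.μ y x} z) ↔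
      ∃ I : Set X, F.IsIdeal I ∧ I ∩ B = {0} ∧ FuzzyRiesz.sumSet I B = Set.univ) := by
  classical
  -- the intersection `B^d ∩ B = {0}`
  have hInter : F.dcomp B ∩ B = {0} := by
    apply Set.eq_singleton_iff_unique_mem.mpr
    refine ⟨⟨zero_mem_dcomp F B, hB.zero_mem⟩, ?_⟩
    rintro x ⟨hxd, hxB⟩
    have h := hxd x hxB
    rw [finf_idem] at h
    exact eq_zero_of_fabs_eq_zero h
  -- (ii) implies the decomposition of positive elements
  have decomp_pos :
      (∀ x : X, F.Pos x →
        ∃ z ∈ B, F.IsSup {y : X | y ∈ B ∧ F.Pos y ∧ 1/2 < F.μ y x} z) →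
      ∀ u : X, F.Pos u → ∃ d ∈ F.dcomp B, ∃ b ∈ B, u = d + b := by
    intro hii u hu
    obtain ⟨z, hzB, hzub, hzlub⟩ := hii u hu
    have h0z : F.fle 0 z := hzub 0 ⟨hB.zero_mem, fle_refl F 0, hu⟩
    have hzu : F.fle z u := hzlub u (fun y hy => hy.2.2)
    have hd0 : F.fle 0 (u - z) := fle_sub hzu
    refine ⟨u - z, ?_, z, hzB, by abel⟩
    intro y hy
    rw [fabs_of_nonneg hd0]
    have hw0 : F.fle 0 (F.inf (u - z) (F.fabs y)) := fle_finf hd0 (fabs_nonneg F y)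
    have hwB : F.inf (u - z) (F.fabs y) ∈ B := hB.solid _ (F.fabs y)
      (by rw [fabs_of_nonneg hw0, fabs_of_nonneg (fabs_nonneg F y)]
          exact F.inf_le_right _ _)
      (hB.fabs_mem hy)
    have hzwu : F.fle (z + F.inf (u - z) (F.fabs y)) u := by
      have h1 : F.fle (F.inf (u - z) (F.fabs y)) (u - z) := F.inf_le_left _ _
      have h2 := fle_add_left h1 z
      have e : z + (u - z) = u := by abel
      rwa [e] at h2
    have hwle : F.fle (z + F.inf (u - z) (F.fabs y)) z := hzub _
      ⟨hB.add_mem hzB hwB,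
       (by have h := fle_add h0z hw0; rwa [add_zero] at h),
       hzwu⟩
    have hwz : F.fle (F.inf (u - z) (F.fabs y)) 0 := by
      have h2 : F.fle (F.inf (u - z) (F.fabs y) + z) (0 + z) := by
        rw [add_comm _ z, zero_add]; exact hwle
      exact fle_of_add_right h2
    exact fle_antisymm hwz hw0
  -- (ii) → (iii)
  have h23 :
      (∀ x : X, F.Pos x →
        ∃ z ∈ B, F.IsSup {y : X | y ∈ B ∧ F.Pos y ∧ 1/2 < F.μ y x} z) →
      ∃ I : Set X, F.IsIdeal I ∧ I ∩ B = {0} ∧ FuzzyRiesz.sumSet I B = Set.univ := by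
    intro hii
    refine ⟨F.dcomp B, dcomp_isIdeal F B, hInter, Set.eq_univ_iff_forall.mpr fun x => ?_⟩
    obtain ⟨d1, hd1, b1, hb1, e1⟩ := decomp_pos hii (F.fpos x) (fpos_nonneg F x)
    obtain ⟨d2, hd2, b2, hb2, e2⟩ := decomp_pos hii (F.fneg x) (fneg_nonneg F x)
    refine ⟨d1 - d2, (dcomp_isIdeal F B).sub_mem hd1 hd2, b1 - b2, hB.sub_mem hb1 hb2, ?_⟩
    have ex : x = F.fpos x - F.fneg x := by rw [fpos_eq]; abel
    rw [ex, e1, e2]; abel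
  -- (iii) → (ii)
  have h32 :
      (∃ I : Set X, F.IsIdeal I ∧ I ∩ B = {0} ∧ FuzzyRiesz.sumSet I B = Set.univ) →
      ∀ x : X, F.Pos x →
        ∃ z ∈ B, F.IsSup {y : X | y ∈ B ∧ F.Pos y ∧ 1/2 < F.μ y x} z := by
    rintro ⟨I, hI, hIB, hsum⟩ x hx
    have hxmem : x ∈ FuzzyRiesz.sumSet I B := by rw [hsum]; trivial
    obtain ⟨a, ha, b, hb, hxe⟩ := hxmem
    have hortho := ortho_of_inter hI hB hIB a ha b hb
    obtain ⟨h0a, h0b⟩ := pos_split hortho (by rw [← hxe]; exact hx)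
    refine ⟨b, hb, ?_, ?_⟩
    · rintro y ⟨hyB, hy0, hyx⟩
      have hyb : F.fle (y - b) a := by
        have h1 : F.fle y (a + b) := by rw [← hxe]; exact hyx
        have h2 := fle_add_right h1 (-b)
        have egl : y + -b = y - b := by abel
        have egr : a + b + -b = a := by abel
        rwa [egl, egr] at h2
      have hpm : F.fle (F.fpos (y - b)) (F.fabs a) :=
        fle_trans (fpos_mono hyb) (fpos_le_fabs F a)
      have hybB : y - b ∈ B := hB.sub_mem hyB hb
      have h0 : F.inf (F.fabs a) (F.fabs (y - b)) = 0 :=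
        ortho_of_inter hI hB hIB a ha _ hybB
      have hle0 : F.fle (F.fpos (y - b)) 0 := by
        have h := fle_finf hpm (fpos_le_fabs F (y - b))
        rwa [h0] at h
      have hyb0 : F.fle (y - b) 0 := fle_trans (fle_fpos F (y - b)) hle0
      have h3 := fle_add_right hyb0 b
      have e1 : y - b + b = y := by abel
      rw [e1, zero_add] at h3
      exact h3
    · intro y hy
      refine hy b ⟨hb, h0b, ?_⟩
      have h4 := fle_add_right h0a b
      rw [zero_add, ← hxe] at h4
      exact h4
  -- (i) → (iii)
  have h13 : FuzzyRiesz.IsProjBand.{u} F B →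
      ∃ I : Set X, F.IsIdeal I ∧ I ∩ B = {0} ∧ FuzzyRiesz.sumSet I B = Set.univ := by
    rintro ⟨-, hdec⟩
    refine ⟨F.dcomp B, dcomp_isIdeal F B, hInter, Set.eq_univ_iff_forall.mpr fun x => ?_⟩
    obtain ⟨⟨p1, p2⟩, ⟨hp1, hp2, hpe⟩, -⟩ := hdec x
    exact ⟨p2, hp2, p1, hp1, by rw [hpe]; abel⟩
  -- (iii) → (i)
  have h31 :
      (∃ I : Set X, F.IsIdeal I ∧ I ∩ B = {0} ∧ FuzzyRiesz.sumSet I B = Set.univ) →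
      FuzzyRiesz.IsProjBand.{u} F B := by
    rintro ⟨I, hI, hIB, hsum⟩
    have hortho := ortho_of_inter hI hB hIB
    have hdecomp : ∀ x : X, ∃ a ∈ I, ∃ b ∈ B, x = a + b := by
      intro x
      have hx : x ∈ FuzzyRiesz.sumSet I B := by rw [hsum]; trivial
      exact hx
    constructor
    · refine ⟨hB, ?_⟩
      intro ι _ _ _ xn l hmem hconv
      obtain ⟨y, hy1, _, hy3⟩ := hconv
      obtain ⟨a, ha, b, hb, hle⟩ := hdecomp l
      have key : ∀ α : ι, F.fle (F.fabs a) (y α) := by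
        intro α
        have htB : xn α - b ∈ B := hB.sub_mem (hmem α) hb
        have e : a = (l - xn α) + (xn α - b) := by rw [hle]; abel
        have h1 : F.fle (F.fabs a) (F.fabs (l - xn α) + F.fabs (xn α - b)) := by
          rw [e]; exact fabs_add F _ _
        have hzab : F.inf (F.fabs a) (F.fabs (xn α - b)) = 0 := hortho a ha _ htB
        have h2 : F.fle (F.fabs a)
            (F.inf (F.fabs a) (F.fabs (l - xn α) + F.fabs (xn α - b))) :=
          fle_finf (fle_refl F _) h1
        have h3 := finf_subadd (fabs_nonneg F a) (fabs_nonneg F (l - xn α))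
          (fabs_nonneg F (xn α - b))
        rw [hzab, add_zero] at h3
        have h4 : F.fle (F.fabs a) (F.fabs (l - xn α)) :=
          fle_trans h2 (fle_trans h3 (F.inf_le_right _ _))
        have e2 : F.fabs (l - xn α) = F.fabs (xn α - l) := by
          rw [← neg_sub (xn α) l, fabs_neg]
        rw [e2] at h4
        exact fle_trans h4 (hy1 α)
      have hlb : F.LowerBound (Set.range y) (F.fabs a) := by
        rintro _ ⟨α, rfl⟩; exact key α
      have h5 : F.fle (F.fabs a) 0 := hy3.2 (F.fabs a) hlb
      have h7 : a = 0 := eq_zero_of_fabs_eq_zero (fle_antisymm h5 (fabs_nonneg F a))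
      rw [hle, h7, zero_add]
      exact hb
    · intro x
      obtain ⟨a, ha, b, hb, hxe⟩ := hdecomp x
      have had : a ∈ F.dcomp B := fun yb hyb => hortho a ha yb hyb
      refine ⟨(b, a), ⟨hb, had, by rw [hxe]; abel⟩, ?_⟩
      rintro ⟨q1, q2⟩ ⟨hq1, hq2, hqe⟩
      have hd : q1 - b ∈ B := hB.sub_mem hq1 hb
      have hd2 : q1 - b ∈ F.dcomp B := by
        have e : q1 - b = a - q2 := by
          rw [sub_eq_sub_iff_add_eq_add]
          exact hqe.symm.trans hxe
        rw [e]
        exact (dcomp_isIdeal F B).sub_mem had hq2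
      have h0 : q1 - b = 0 := by
        have h := hd2 (q1 - b) hd
        rw [finf_idem] at h
        exact eq_zero_of_fabs_eq_zero h
      have hq1b : q1 = b := by rwa [sub_eq_zero] at h0
      have hq2a : q2 = a := by
        have h1 : q1 + q2 = a + b := hqe.symm.trans hxe
        rw [hq1b, add_comm a b] at h1
        exact add_left_cancel h1
      simp only [Prod.mk.injEq]
      exact ⟨hq1b, hq2a⟩
  exact ⟨⟨fun h1 => h32 (h13 h1), fun h2 => h31 (h23 h2)⟩, ⟨h23, h32⟩⟩
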